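/- arXiv:2008.08267 — 5 statements merged into one kernel-verified Lean document; each statement's English description precedes it below -/
import Mathlib

section
/- For all 0 < s < t and a, b ∈ ℝ, p_{t−s}(a) · p_s(b) / p_t(a+b) = p_{s(t−s)/t}(b − (s/t)(a+b)). -/
open Real MeasureTheory

noncomputable def p (t x : ℝ) : ℝ :=
  (Real.sqrt (2 * Real.pi * t))⁻¹ * Real.exp (-x ^ 2 / (2 * t))

theorem heat_kernel_ratio (s t a b : ℝ) (hs : 0 < s) (hst : s < t) :
    p (t - s) a * p s b / p t (a + b) = p (s * (t - s) / t) (b - s / t * (a + b)) := by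
  have ht : 0 < t := hs.trans hst
  have hts : 0 < t - s := sub_pos.mpr hst
  have h1 : (0:ℝ) < 2 * Real.pi * (t - s) := by positivity
  have h2 : (0:ℝ) < 2 * Real.pi * s := by positivity
  have h3 : (0:ℝ) < 2 * Real.pi * t := by positivity
  have h4 : (0:ℝ) < 2 * Real.pi * (s * (t - s) / t) := by positivity
  have hsq : Real.sqrt (2 * Real.pi * (t - s)) * Real.sqrt (2 * Real.pi * s)
      = Real.sqrt (2 * Real.pi * (s * (t - s) / t)) * Real.sqrt (2 * Real.pi * t) := by
    rw [← Real.sqrt_mul h1.le, ← Real.sqrt_mul h4.le]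
    congr 1
    field_simp
  have hexp : Real.exp (-a ^ 2 / (2 * (t - s))) * Real.exp (-b ^ 2 / (2 * s))
      = Real.exp (-(b - s / t * (a + b)) ^ 2 / (2 * (s * (t - s) / t)))
        * Real.exp (-(a + b) ^ 2 / (2 * t)) := by
    rw [← Real.exp_add, ← Real.exp_add]
    congr 1
    field_simp
    ring
  unfold p
  have hne : (Real.sqrt (2 * Real.pi * t))⁻¹ * Real.exp (-(a + b) ^ 2 / (2 * t)) ≠ 0 := by
    positivity
  rw [div_eq_iff hne]
  have key : (Real.sqrt (2 * Real.pi * (t - s)) * Real.sqrt (2 * Real.pi * s))⁻¹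
      * (Real.exp (-a ^ 2 / (2 * (t - s))) * Real.exp (-b ^ 2 / (2 * s)))
      = (Real.sqrt (2 * Real.pi * (s * (t - s) / t)) * Real.sqrt (2 * Real.pi * t))⁻¹
      * (Real.exp (-(b - s / t * (a + b)) ^ 2 / (2 * (s * (t - s) / t)))
        * Real.exp (-(a + b) ^ 2 / (2 * t))) := by
    rw [hsq, hexp]
  rw [mul_inv, mul_inv] at key
  linear_combination key
end

section
/- For all r < s < t and x, z ∈ ℝ, ∫_{-∞}^{∞} p_{t−s}(x−y)² · p_{s−r}(y−z)² dy = √((t−r)/(4π(t−s)(s−r))) · p_{t−r}(x−z)². -/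
open Real MeasureTheory

theorem heat_kernel_square_convolution (r s t x z : ℝ) (hrs : r < s) (hst : s < t) :
    ∫ y : ℝ, (p (t - s) (x - y)) ^ 2 * (p (s - r) (y - z)) ^ 2
      = Real.sqrt ((t - r) / (4 * Real.pi * (t - s) * (s - r))) * (p (t - r) (x - z)) ^ 2 := by
  set a := t - s with ha'
  set b := s - r with hb'
  have ha : 0 < a := by simp [ha']; linarith
  have hb : 0 < b := by simp [hb']; linarith
  have hab : t - r = a + b := by rw [ha', hb']; ring
  have hpi := Real.pi_pos
  have habp : 0 < a + b := by linarith
  have h2a : (0:ℝ) ≤ 2 * π * a := by positivity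
  have h2b : (0:ℝ) ≤ 2 * π * b := by positivity
  have h2ab : (0:ℝ) ≤ 2 * π * (a + b) := by positivity
  set m := (b * x + a * z) / (a + b) with hm
  set c := (a + b) / (a * b) with hc
  have hcpos : 0 < c := by positivity
  have key : ∀ y : ℝ, (p a (x - y)) ^ 2 * (p b (y - z)) ^ 2
      = ((2 * π * a)⁻¹ * (2 * π * b)⁻¹ * Real.exp (-(x - z) ^ 2 / (a + b)))
        * Real.exp (-c * (y - m) ^ 2) := by
    intro y
    simp only [p, mul_pow, ← Real.exp_add, sq (Real.exp _), inv_pow,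
      Real.sq_sqrt h2a, Real.sq_sqrt h2b]
    have hexp : -(x - y) ^ 2 / (2 * a) + -(x - y) ^ 2 / (2 * a) +
        (-(y - z) ^ 2 / (2 * b) + -(y - z) ^ 2 / (2 * b))
        = -(x - z) ^ 2 / (a + b) + -c * (y - m) ^ 2 := by
      rw [hc, hm]; field_simp; ring
    rw [mul_mul_mul_comm, ← Real.exp_add, hexp, Real.exp_add]; ring
  rw [integral_congr_ae (Filter.Eventually.of_forall key), integral_const_mul,
    integral_sub_right_eq_self (fun y => Real.exp (-c * y ^ 2)) m, integral_gaussian]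
  have hps : p (t - r) (x - z) ^ 2 = (2 * π * (a + b))⁻¹ * Real.exp (-(x - z) ^ 2 / (a + b)) := by
    simp only [p, mul_pow, sq (Real.exp _), ← Real.exp_add, inv_pow, Real.sq_sqrt h2ab, hab]
    congr 1
    congr 1
    field_simp
    ring
  rw [hps, hab]
  -- now a pure constant identity times the common exponential
  have hconst : (2 * π * a)⁻¹ * (2 * π * b)⁻¹ * Real.sqrt (π / c)
      = Real.sqrt ((a + b) / (4 * π * a * b)) * (2 * π * (a + b))⁻¹ := by
    have hL : (0:ℝ) ≤ (2 * π * a)⁻¹ * (2 * π * b)⁻¹ * Real.sqrt (π / c) := by positivity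
    have hR : (0:ℝ) ≤ Real.sqrt ((a + b) / (4 * π * a * b)) * (2 * π * (a + b))⁻¹ := by positivity
    have hsq : ((2 * π * a)⁻¹ * (2 * π * b)⁻¹ * Real.sqrt (π / c)) ^ 2
        = (Real.sqrt ((a + b) / (4 * π * a * b)) * (2 * π * (a + b))⁻¹) ^ 2 := by
      have h1 : Real.sqrt (π / c) ^ 2 = π / c := Real.sq_sqrt (by positivity)
      have h2 : Real.sqrt ((a + b) / (4 * π * a * b)) ^ 2 = (a + b) / (4 * π * a * b) :=
        Real.sq_sqrt (by positivity)
      rw [mul_pow, mul_pow, mul_pow, h1, h2, hc]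
      field_simp
      ring
    calc (2 * π * a)⁻¹ * (2 * π * b)⁻¹ * Real.sqrt (π / c)
        = Real.sqrt (((2 * π * a)⁻¹ * (2 * π * b)⁻¹ * Real.sqrt (π / c)) ^ 2) :=
          (Real.sqrt_sq hL).symm
      _ = Real.sqrt ((Real.sqrt ((a + b) / (4 * π * a * b)) * (2 * π * (a + b))⁻¹) ^ 2) := by
          rw [hsq]
      _ = _ := Real.sqrt_sq hR
  calc (2 * π * a)⁻¹ * (2 * π * b)⁻¹ * Real.exp (-(x - z) ^ 2 / (a + b)) * Real.sqrt (π / c)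
      = ((2 * π * a)⁻¹ * (2 * π * b)⁻¹ * Real.sqrt (π / c)) * Real.exp (-(x - z) ^ 2 / (a + b)) := by
        ring
    _ = (Real.sqrt ((a + b) / (4 * π * a * b)) * (2 * π * (a + b))⁻¹) * Real.exp (-(x - z) ^ 2 / (a + b)) := by
        rw [hconst]
    _ = _ := by ring
end

section
/- For all λ ≥ 0, the series ∑_{n=1}^{∞} λ^{n−1} / Γ((n+1)/2) equals 2 e^{λ²} ∫_{−∞}^{√2 λ} (1/√(2π)) e^{−y²/2} dy. -/
open Real MeasureTheory

section GammaSeriesAux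

open Set Nat

private lemma fact_gamma_le' (k : ℕ) :
    (k ! : ℝ) * Real.Gamma (3/2) ≤ Real.Gamma ((k : ℝ) + 3/2) := by
  induction k with
  | zero => simp
  | succ k ih =>
    have hpos : (0:ℝ) < (k:ℝ) + 3/2 := by positivity
    have hG : 0 < Real.Gamma ((k:ℝ) + 3/2) := Real.Gamma_pos_of_pos hpos
    have h1 : ((k:ℝ) + 1 + 3/2) = ((k:ℝ) + 3/2) + 1 := by ring
    rw [Nat.cast_succ, h1, Real.Gamma_add_one hpos.ne']
    calc ((k+1)! : ℝ) * Real.Gamma (3/2) = ((k:ℝ)+1) * ((k ! : ℝ) * Real.Gamma (3/2)) := by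
          push_cast [Nat.factorial_succ]; ring
      _ ≤ ((k:ℝ)+1) * Real.Gamma ((k:ℝ)+3/2) := by
          exact mul_le_mul_of_nonneg_left ih (by positivity)
      _ ≤ ((k:ℝ)+3/2) * Real.Gamma ((k:ℝ)+3/2) := by nlinarith

set_option maxHeartbeats 1000000 in
private lemma summable_gamma_aux' (l : ℝ) (hl : 0 ≤ l) :
    Summable (fun n : ℕ => l ^ n / Real.Gamma (((n : ℝ) + 2) / 2)) := by
  have hG32 : 0 < Real.Gamma (3/2 : ℝ) := Real.Gamma_pos_of_pos (by norm_num)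
  apply Summable.even_add_odd
  · have : ∀ k : ℕ, l ^ (2*k) / Real.Gamma ((((2*k : ℕ) : ℝ) + 2) / 2)
        = (l^2)^k / k ! := by
      intro k
      have h : (((2*k : ℕ) : ℝ) + 2) / 2 = (k : ℝ) + 1 := by push_cast; ring
      rw [h, Real.Gamma_nat_eq_factorial, pow_mul]
    exact Summable.congr (Real.summable_pow_div_factorial (l^2)) (fun k => (this k).symm)
  · refine Summable.of_nonneg_of_le (fun k => by positivity) (fun k => ?_)
      ((Real.summable_pow_div_factorial (l^2)).mul_left (l / Real.Gamma (3/2)))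
    have h : (((2*k+1 : ℕ) : ℝ) + 2) / 2 = (k : ℝ) + 3/2 := by push_cast; ring
    rw [h]
    have hge : (k ! : ℝ) * Real.Gamma (3/2) ≤ Real.Gamma ((k : ℝ) + 3/2) := fact_gamma_le' k
    have hfk : (0:ℝ) < k ! := by positivity
    have hpow : l ^ (2*k+1) = l * (l^2)^k := by rw [pow_succ, pow_mul]; ring
    rw [hpow]
    rw [div_le_iff₀ (lt_of_lt_of_le (by positivity) hge)]
    have : l / Real.Gamma (3/2) * ((l^2)^k / k !) * ((k ! : ℝ) * Real.Gamma (3/2))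
        = l * (l^2)^k := by field_simp
    calc l * (l^2)^k ≤ l / Real.Gamma (3/2) * ((l^2)^k / k !) * Real.Gamma ((k:ℝ) + 3/2) := by
          rw [← this]
          exact mul_le_mul_of_nonneg_left hge (by positivity)
      _ = _ := by ring

private lemma term_integral' (l : ℝ) (hl : 0 ≤ l) (n : ℕ) :
    (∫ t in Ioi (0:ℝ),
      2 * (Real.sqrt (2*π))⁻¹ * ((Real.sqrt 2 * l * t) ^ n / n !) * Real.exp (-t^2/2))
      = l ^ n / Real.Gamma (((n:ℝ) + 2) / 2) := by
  have hI : (∫ t in Ioi (0:ℝ), t ^ (n:ℝ) * Real.exp (-(1/2) * t ^ (2:ℝ)))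
      = (1/2:ℝ) ^ (-((n:ℝ) + 1) / 2) * (1 / 2) * Real.Gamma (((n:ℝ) + 1) / 2) :=
    integral_rpow_mul_exp_neg_mul_rpow two_pos
      (lt_of_lt_of_le neg_one_lt_zero (Nat.cast_nonneg n)) (by norm_num)
  have congr1 : ∀ t ∈ Ioi (0:ℝ),
      2 * (Real.sqrt (2*π))⁻¹ * ((Real.sqrt 2 * l * t) ^ n / n !) * Real.exp (-t^2/2)
        = (2 * (Real.sqrt (2*π))⁻¹ * (Real.sqrt 2 * l) ^ n / n !)
            * (t ^ (n:ℝ) * Real.exp (-(1/2) * t ^ (2:ℝ))) := by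
    intro t ht
    rw [Real.rpow_natCast, Real.rpow_two]
    rw [show -t^2/2 = -(1/2) * t^2 by ring, mul_pow]
    ring
  rw [setIntegral_congr_fun measurableSet_Ioi congr1, integral_const_mul, hI]
  have hΓ2 : 0 < Real.Gamma (((n:ℝ) + 2) / 2) := Real.Gamma_pos_of_pos (by positivity)
  have hdup : Real.Gamma (((n:ℝ) + 1) / 2) * Real.Gamma (((n:ℝ) + 2) / 2)
      = (n ! : ℝ) * (2:ℝ) ^ (-(n:ℝ)) * Real.sqrt π := by
    have h := Real.Gamma_mul_Gamma_add_half (((n:ℝ) + 1) / 2)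
    rw [show ((n:ℝ)+1)/2 + 1/2 = ((n:ℝ)+2)/2 by ring,
      show 2 * (((n:ℝ)+1)/2) = (n:ℝ)+1 by ring, Real.Gamma_nat_eq_factorial,
      show 1 - ((n:ℝ)+1) = -(n:ℝ) by ring] at h
    exact h
  have h1 : (Real.sqrt 2) ^ n * (1/2:ℝ) ^ (-((n:ℝ) + 1) / 2) = (2:ℝ) ^ (n:ℝ) * Real.sqrt 2 := by
    have e1 : (Real.sqrt 2) ^ n = (2:ℝ) ^ ((n:ℝ) / 2) := by
      rw [Real.sqrt_eq_rpow, ← Real.rpow_natCast ((2:ℝ) ^ (1/2:ℝ)) n,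
        ← Real.rpow_mul (by norm_num)]
      congr 1; ring
    have e2 : (1/2:ℝ) ^ (-((n:ℝ) + 1) / 2) = (2:ℝ) ^ (((n:ℝ) + 1) / 2) := by
      rw [show (1/2:ℝ) = 2⁻¹ by norm_num, Real.inv_rpow (by norm_num),
        ← Real.rpow_neg (by norm_num)]
      congr 1; ring
    rw [e1, e2, ← Real.rpow_add (by norm_num),
      show (n:ℝ)/2 + ((n:ℝ)+1)/2 = (n:ℝ) + 1/2 by ring,
      Real.rpow_add (by norm_num), Real.rpow_natCast, ← Real.sqrt_eq_rpow]
  have h3 : (2:ℝ) ^ (n:ℝ) * (2:ℝ) ^ (-(n:ℝ)) = 1 := by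
    rw [← Real.rpow_add (by norm_num)]; simp
  have hsq : Real.sqrt (2*π) = Real.sqrt 2 * Real.sqrt π := Real.sqrt_mul (by norm_num) π
  have hfn : (0:ℝ) < (n ! : ℝ) := by positivity
  rw [eq_div_iff hΓ2.ne']
  rw [hsq, mul_pow]
  calc 2 * (Real.sqrt 2 * Real.sqrt π)⁻¹ * ((Real.sqrt 2) ^ n * l ^ n) / n !
        * ((1/2:ℝ) ^ (-((n:ℝ) + 1) / 2) * (1 / 2) * Real.Gamma (((n:ℝ) + 1) / 2))
        * Real.Gamma (((n:ℝ) + 2) / 2)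
      = ((Real.sqrt 2) ^ n * (1/2:ℝ) ^ (-((n:ℝ) + 1) / 2))
        * (Real.Gamma (((n:ℝ) + 1) / 2) * Real.Gamma (((n:ℝ) + 2) / 2))
        * ((Real.sqrt 2 * Real.sqrt π)⁻¹ * l ^ n / n !) := by ring
    _ = ((2:ℝ) ^ (n:ℝ) * Real.sqrt 2) * ((n ! : ℝ) * (2:ℝ) ^ (-(n:ℝ)) * Real.sqrt π)
        * ((Real.sqrt 2 * Real.sqrt π)⁻¹ * l ^ n / n !) := by rw [h1, hdup]
    _ = ((2:ℝ) ^ (n:ℝ) * (2:ℝ) ^ (-(n:ℝ)))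
        * ((Real.sqrt 2 * Real.sqrt π) * (Real.sqrt 2 * Real.sqrt π)⁻¹)
        * ((n ! : ℝ) / n !) * l ^ n := by ring
    _ = l ^ n := by
        rw [h3, mul_inv_cancel₀ (by positivity), div_self hfn.ne']; ring

end GammaSeriesAux

/-- `∑_{n=1}^∞ λ^{n−1}/Γ((n+1)/2) = 2 e^{λ²} Φ(√2 λ)·...` (index shifted: `n-1 ↦ n`). -/
theorem gamma_series_identity (l : ℝ) (hl : 0 ≤ l) :
    ∑' n : ℕ, l ^ n / Real.Gamma (((n : ℝ) + 2) / 2)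
      = 2 * Real.exp (l ^ 2) *
        ∫ y in Set.Iic (Real.sqrt 2 * l), (Real.sqrt (2 * Real.pi))⁻¹ * Real.exp (-y ^ 2 / 2) := by
  open Set Nat in
  have ha : (0:ℝ) ≤ Real.sqrt 2 * l := by positivity
  -- Step 1 : substitution `y = √2 l - t`
  have hsub : (∫ y in Iic (Real.sqrt 2 * l), (Real.sqrt (2*π))⁻¹ * Real.exp (-y^2/2))
      = ∫ t in Ioi (0:ℝ), (Real.sqrt (2*π))⁻¹ * Real.exp (-(Real.sqrt 2 * l - t)^2/2) := by
    rw [← integral_indicator measurableSet_Iic,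
      ← integral_sub_left_eq_self
        (fun y => (Iic (Real.sqrt 2 * l)).indicator
          (fun y => (Real.sqrt (2*π))⁻¹ * Real.exp (-y^2/2)) y) volume (Real.sqrt 2 * l)]
    have hind : ∀ t : ℝ, (Iic (Real.sqrt 2 * l)).indicator
          (fun y => (Real.sqrt (2*π))⁻¹ * Real.exp (-y^2/2)) (Real.sqrt 2 * l - t)
        = (Ici (0:ℝ)).indicator
            (fun t => (Real.sqrt (2*π))⁻¹ * Real.exp (-(Real.sqrt 2 * l - t)^2/2)) t := by
      intro t
      by_cases h : 0 ≤ t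
      · rw [Set.indicator_of_mem (by simpa using h),
          Set.indicator_of_mem (show t ∈ Ici (0:ℝ) from h)]
      · rw [Set.indicator_of_notMem (by simpa using h),
          Set.indicator_of_notMem (show t ∉ Ici (0:ℝ) by simpa using h)]
    simp_rw [hind]
    rw [integral_indicator measurableSet_Ici, integral_Ici_eq_integral_Ioi]
  -- Step 2 : pointwise series expansion
  have hpt : ∀ t : ℝ, 2 * Real.exp (l^2)
        * ((Real.sqrt (2*π))⁻¹ * Real.exp (-(Real.sqrt 2 * l - t)^2/2))
      = ∑' n : ℕ, 2 * (Real.sqrt (2*π))⁻¹ * ((Real.sqrt 2 * l * t)^n / n !)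
          * Real.exp (-t^2/2) := by
    intro t
    have hexp : Real.exp (Real.sqrt 2 * l * t)
        = ∑' n : ℕ, (Real.sqrt 2 * l * t)^n / n ! := by
      rw [Real.exp_eq_exp_ℝ, NormedSpace.exp_eq_tsum_div]
    have h2 : (∑' n : ℕ, 2 * (Real.sqrt (2*π))⁻¹ * ((Real.sqrt 2 * l * t)^n / n !)
          * Real.exp (-t^2/2))
        = (∑' n : ℕ, (Real.sqrt 2 * l * t)^n / n !)
            * (2 * (Real.sqrt (2*π))⁻¹ * Real.exp (-t^2/2)) := by
      rw [← tsum_mul_right]; exact tsum_congr fun n => by ring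
    have hsq2 : (Real.sqrt 2 * l)^2 = 2 * l^2 := by
      rw [mul_pow, Real.sq_sqrt (by norm_num : (0:ℝ) ≤ 2)]
    have key : Real.exp (l^2) * Real.exp (-(Real.sqrt 2 * l - t)^2/2)
        = Real.exp (Real.sqrt 2 * l * t) * Real.exp (-t^2/2) := by
      rw [← Real.exp_add, ← Real.exp_add]
      congr 1
      linear_combination (-1/2 : ℝ) * hsq2
    rw [h2, ← hexp]
    calc 2 * Real.exp (l^2) * ((Real.sqrt (2*π))⁻¹ * Real.exp (-(Real.sqrt 2 * l - t)^2/2))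
        = (Real.exp (l^2) * Real.exp (-(Real.sqrt 2 * l - t)^2/2))
            * (2 * (Real.sqrt (2*π))⁻¹) := by ring
      _ = (Real.exp (Real.sqrt 2 * l * t) * Real.exp (-t^2/2))
            * (2 * (Real.sqrt (2*π))⁻¹) := by rw [key]
      _ = _ := by ring
  -- Step 3 : swap integral and sum
  have hnorm : ∀ n : ℕ, (∫ t in Ioi (0:ℝ),
        ‖2 * (Real.sqrt (2*π))⁻¹ * ((Real.sqrt 2 * l * t)^n / n !) * Real.exp (-t^2/2)‖)
      = l ^ n / Real.Gamma (((n:ℝ) + 2) / 2) := by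
    intro n
    rw [← term_integral' l hl n]
    refine setIntegral_congr_fun measurableSet_Ioi fun t ht => ?_
    have ht' : (0:ℝ) ≤ t := le_of_lt ht
    rw [Real.norm_eq_abs, abs_of_nonneg (by positivity)]
  have hswap : (∫ t in Ioi (0:ℝ), ∑' n : ℕ,
        2 * (Real.sqrt (2*π))⁻¹ * ((Real.sqrt 2 * l * t)^n / n !) * Real.exp (-t^2/2))
      = ∑' n : ℕ, ∫ t in Ioi (0:ℝ),
        2 * (Real.sqrt (2*π))⁻¹ * ((Real.sqrt 2 * l * t)^n / n !) * Real.exp (-t^2/2) := by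
    refine (MeasureTheory.integral_tsum_of_summable_integral_norm (fun n => ?_) ?_).symm
    · have base : Integrable (fun t : ℝ => t ^ n * Real.exp (-(1/2) * t^2)) := by
        have := integrable_rpow_mul_exp_neg_mul_sq (b := 1/2) (by norm_num) (s := (n:ℝ))
          (lt_of_lt_of_le neg_one_lt_zero (Nat.cast_nonneg n))
        simpa [Real.rpow_natCast] using this
      have h2 : Integrable (fun t : ℝ =>
          (2 * (Real.sqrt (2*π))⁻¹ * (Real.sqrt 2 * l)^n / n !)
            * (t ^ n * Real.exp (-(1/2) * t^2))) := base.const_mul _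
      refine (h2.restrict (s := Ioi 0)).congr (ae_of_all _ fun t => ?_)
      simp only []
      rw [show -(1/2) * t^2 = -t^2/2 by ring, mul_pow]
      ring
    · exact Summable.congr (summable_gamma_aux' l hl) (fun n => (hnorm n).symm)
  -- Assembly
  rw [hsub, ← integral_const_mul]
  calc ∑' n : ℕ, l ^ n / Real.Gamma (((n : ℝ) + 2) / 2)
      = ∑' n : ℕ, ∫ t in Ioi (0:ℝ),
          2 * (Real.sqrt (2*π))⁻¹ * ((Real.sqrt 2 * l * t)^n / n !) * Real.exp (-t^2/2) :=
        tsum_congr fun n => (term_integral' l hl n).symm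
    _ = ∫ t in Ioi (0:ℝ), ∑' n : ℕ,
          2 * (Real.sqrt (2*π))⁻¹ * ((Real.sqrt 2 * l * t)^n / n !) * Real.exp (-t^2/2) :=
        hswap.symm
    _ = ∫ t in Ioi (0:ℝ), 2 * Real.exp (l^2)
          * ((Real.sqrt (2*π))⁻¹ * Real.exp (-(Real.sqrt 2 * l - t)^2/2)) := by
        refine setIntegral_congr_fun measurableSet_Ioi fun t _ => (hpt t).symm
end

section
/- Let G_t(x,y) = ∑_{n∈ℤ} (p_t(x−y+2nL) + p_t(x+y+2nL)) be the Neumann heat kernel on [0,L]. Then for every t > 0 and x,y ∈ [0,L], G_t(x,y) ≤ p_t(x−y) · (4 + 4/(1 − e^{−L²/t})), where p_t is the Gaussian heat kernel on ℝ. -/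
open Real MeasureTheory

/-- Neumann heat kernel on `[0, L]`. -/
noncomputable def GN (L t x y : ℝ) : ℝ :=
  ∑' n : ℤ, (p t (x - y + 2 * n * L) + p t (x + y + 2 * n * L))

lemma p_nonneg (t x : ℝ) : 0 ≤ p t x := by
  unfold p; positivity

lemma sq_ge_aux (a v L : ℝ) (k : ℕ) (ha : 0 ≤ a) (hL : 0 < L)
    (h : a + 2 * k * L ≤ |v|) : a ^ 2 + 2 * k * L ^ 2 ≤ v ^ 2 := by
  have hk : (0:ℝ) ≤ (k:ℝ) * (2 * k - 1) := by
    rcases Nat.eq_zero_or_pos k with h0 | h1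
    · simp [h0]
    · have : (1:ℝ) ≤ (k:ℝ) := by exact_mod_cast h1
      nlinarith
  have h2 : (a + 2 * k * L) ^ 2 ≤ |v| ^ 2 :=
    pow_le_pow_left₀ (by positivity) h 2
  rw [sq_abs] at h2
  nlinarith [mul_nonneg (mul_nonneg (Nat.cast_nonneg k : (0:ℝ) ≤ (k:ℝ)) hL.le) ha]

lemma expo_le (L t d a : ℝ) (hL : 0 < L) (ht : 0 < t) (k : ℕ)
    (h : d ^ 2 + 2 * k * L ^ 2 ≤ a ^ 2) :
    p t a ≤ p t d * (Real.exp (-L ^ 2 / t)) ^ k := by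
  have hexp : Real.exp (-a ^ 2 / (2 * t)) ≤
      Real.exp (-d ^ 2 / (2 * t)) * (Real.exp (-L ^ 2 / t)) ^ k := by
    rw [← Real.exp_nat_mul, ← Real.exp_add]
    apply Real.exp_le_exp.2
    have h2t : (0:ℝ) < 2 * t := by linarith
    have hq : (k:ℝ) * (-L ^ 2 / t) = (-(2 * k * L ^ 2)) / (2 * t) := by
      field_simp
    rw [hq, ← add_div, div_le_div_iff₀ h2t h2t]
    nlinarith
  unfold p
  have hc : (0:ℝ) ≤ (Real.sqrt (2 * Real.pi * t))⁻¹ := by positivity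
  calc (Real.sqrt (2 * Real.pi * t))⁻¹ * Real.exp (-a ^ 2 / (2 * t))
      ≤ (Real.sqrt (2 * Real.pi * t))⁻¹ *
        (Real.exp (-d ^ 2 / (2 * t)) * (Real.exp (-L ^ 2 / t)) ^ k) :=
        mul_le_mul_of_nonneg_left hexp hc
    _ = (Real.sqrt (2 * Real.pi * t))⁻¹ * Real.exp (-d ^ 2 / (2 * t)) *
        (Real.exp (-L ^ 2 / t)) ^ k := (mul_assoc _ _ _).symm

lemma term_le (L t x y : ℝ) (hL : 0 < L) (ht : 0 < t)
    (hx : x ∈ Set.Icc 0 L) (hy : y ∈ Set.Icc 0 L) (n : ℤ) :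
    p t (x - y + 2 * n * L) + p t (x + y + 2 * n * L) ≤
      2 * p t (x - y) * (Real.exp (-L ^ 2 / t)) ^ (n.natAbs - 1) := by
  obtain ⟨hx0, hxL⟩ := hx
  obtain ⟨hy0, hyL⟩ := hy
  set a := |x - y| with ha
  have ha0 : 0 ≤ a := abs_nonneg _
  have haL : a ≤ L := abs_le.2 ⟨by linarith, by linarith⟩
  have hst : a ≤ x + y := abs_le.2 ⟨by linarith, by linarith⟩
  have hs2 : a ≤ 2 * L - (x + y) := abs_le.2 ⟨by linarith, by linarith⟩
  have hle : x - y ≤ a := le_abs_self _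
  have hge : -a ≤ x - y := neg_abs_le _
  set k := n.natAbs - 1 with hk
  have main1 : a + 2 * k * L ≤ |x - y + 2 * n * L| := by
    rcases lt_trichotomy n 0 with hn | hn | hn
    · -- n < 0
      have hm1 : 1 ≤ n.natAbs := Int.natAbs_pos.2 (ne_of_lt hn)
      have hkr : (k:ℝ) = -(n:ℝ) - 1 := by
        have h1 : ((n.natAbs : ℕ) : ℝ) = -(n:ℝ) := by
          rw [Nat.cast_natAbs, abs_of_nonpos hn.le]; push_cast; ring
        rw [hk, Nat.cast_sub hm1, h1, Nat.cast_one]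
      have hv : a + 2 * k * L ≤ -(x - y + 2 * n * L) := by
        rw [hkr]; nlinarith
      exact hv.trans (neg_le_abs _)
    · subst hn
      simp [hk, ha]
    · -- n > 0
      have hm1 : 1 ≤ n.natAbs := Int.natAbs_pos.2 (ne_of_gt hn)
      have hkr : (k:ℝ) = (n:ℝ) - 1 := by
        have h1 : ((n.natAbs : ℕ) : ℝ) = (n:ℝ) := by
          rw [Nat.cast_natAbs, abs_of_nonneg hn.le]
        rw [hk, Nat.cast_sub hm1, h1, Nat.cast_one]
      have hv : a + 2 * k * L ≤ x - y + 2 * n * L := by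
        rw [hkr]; nlinarith
      exact hv.trans (le_abs_self _)
  have main2 : a + 2 * k * L ≤ |x + y + 2 * n * L| := by
    rcases lt_trichotomy n 0 with hn | hn | hn
    · have hm1 : 1 ≤ n.natAbs := Int.natAbs_pos.2 (ne_of_lt hn)
      have hkr : (k:ℝ) = -(n:ℝ) - 1 := by
        have h1 : ((n.natAbs : ℕ) : ℝ) = -(n:ℝ) := by
          rw [Nat.cast_natAbs, abs_of_nonpos hn.le]; push_cast; ring
        rw [hk, Nat.cast_sub hm1, h1, Nat.cast_one]
      have hv : a + 2 * k * L ≤ -(x + y + 2 * n * L) := by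
        rw [hkr]; nlinarith
      exact hv.trans (neg_le_abs _)
    · subst hn
      simpa [hk] using hst.trans (le_abs_self _)
    · have hm1 : 1 ≤ n.natAbs := Int.natAbs_pos.2 (ne_of_gt hn)
      have hkr : (k:ℝ) = (n:ℝ) - 1 := by
        have h1 : ((n.natAbs : ℕ) : ℝ) = (n:ℝ) := by
          rw [Nat.cast_natAbs, abs_of_nonneg hn.le]
        rw [hk, Nat.cast_sub hm1, h1, Nat.cast_one]
      have hv : a + 2 * k * L ≤ x + y + 2 * n * L := by
        rw [hkr]
        have hn1 : (1:ℝ) ≤ (n:ℝ) := by exact_mod_cast hn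
        nlinarith
      exact hv.trans (le_abs_self _)
  have hd2 : (x - y) ^ 2 = a ^ 2 := (sq_abs _).symm
  have e1 : p t (x - y + 2 * n * L) ≤ p t (x - y) * (Real.exp (-L ^ 2 / t)) ^ k := by
    apply expo_le L t _ _ hL ht
    rw [hd2]
    exact sq_ge_aux a _ L k ha0 hL main1
  have e2 : p t (x + y + 2 * n * L) ≤ p t (x - y) * (Real.exp (-L ^ 2 / t)) ^ k := by
    apply expo_le L t _ _ hL ht
    rw [hd2]
    exact sq_ge_aux a _ L k ha0 hL main2
  linarith

theorem neumann_gaussian_upper_bound (L : ℝ) (hL : 0 < L) (t : ℝ) (ht : 0 < t)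
    (x y : ℝ) (hx : x ∈ Set.Icc 0 L) (hy : y ∈ Set.Icc 0 L) :
    GN L t x y ≤ p t (x - y) * (4 + 4 / (1 - Real.exp (-L ^ 2 / t))) := by
  set q := Real.exp (-L ^ 2 / t) with hqdef
  have hq0 : 0 < q := Real.exp_pos _
  have hq1 : q < 1 := by
    rw [hqdef, Real.exp_lt_one_iff]
    have : 0 < L ^ 2 / t := by positivity
    rw [neg_div]; linarith
  have h1q : 0 < 1 - q := by linarith
  have hgeo : Summable (fun m : ℕ => q ^ m) := summable_geometric_of_lt_one hq0.le hq1
  have hshift : Summable (fun m : ℕ => q ^ (m - 1)) := by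
    apply Summable.of_nonneg_of_le (fun m => by positivity) (fun m => ?_)
      (hgeo.mul_left q⁻¹)
    rcases m with _ | m
    · simp only [Nat.zero_sub, pow_zero, mul_one]
      rw [le_inv_comm₀ one_pos hq0]
      simpa using hq1.le
    · rw [Nat.add_sub_cancel, pow_succ', ← mul_assoc, inv_mul_cancel₀ hq0.ne', one_mul]
  have hS1 : Summable (fun n : ℤ => q ^ (n.natAbs - 1)) := by
    apply Summable.of_nat_of_neg
    · simpa using hshift
    · simpa using hshift
  have hneg : (fun n : ℕ => q ^ ((-1 + -(n:ℤ)).natAbs - 1)) = fun n : ℕ => q ^ n := by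
    funext n
    have h1 : (-1 + -(n:ℤ)).natAbs = n + 1 := by omega
    rw [h1, Nat.add_sub_cancel]
  have hneg2 : (fun n : ℕ => q ^ ((-((n:ℤ) + 1)).natAbs - 1)) = fun n : ℕ => q ^ n := by
    funext n
    have h1 : (-((n:ℤ) + 1)).natAbs = n + 1 := by omega
    rw [h1, Nat.add_sub_cancel]
  have hval : ∑' n : ℤ, q ^ (n.natAbs - 1) = 1 + 2 * (1 - q)⁻¹ := by
    rw [tsum_of_nat_of_neg_add_one (by simpa using hshift) (by rw [hneg2]; exact hgeo)]
    have e1 : ∑' n : ℕ, q ^ ((n : ℤ).natAbs - 1) = 1 + (1 - q)⁻¹ := by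
      have : (fun n : ℕ => q ^ ((n : ℤ).natAbs - 1)) = fun n : ℕ => q ^ (n - 1) := by
        funext n; simp
      rw [this, Summable.tsum_eq_zero_add hshift]
      simp only [Nat.zero_sub, pow_zero, Nat.add_sub_cancel]
      rw [tsum_geometric_of_lt_one hq0.le hq1]
    have e2 : ∑' n : ℕ, q ^ ((-(n + 1) : ℤ).natAbs - 1) = (1 - q)⁻¹ := by
      rw [hneg2, tsum_geometric_of_lt_one hq0.le hq1]
    rw [e1, e2]; ring
  have hterm : ∀ n : ℤ,
      p t (x - y + 2 * n * L) + p t (x + y + 2 * n * L) ≤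
        2 * p t (x - y) * q ^ (n.natAbs - 1) :=
    fun n => term_le L t x y hL ht hx hy n
  have hnonneg : ∀ n : ℤ, 0 ≤ p t (x - y + 2 * n * L) + p t (x + y + 2 * n * L) :=
    fun n => add_nonneg (p_nonneg _ _) (p_nonneg _ _)
  have hRHSsum : Summable (fun n : ℤ => 2 * p t (x - y) * q ^ (n.natAbs - 1)) :=
    hS1.mul_left _
  have hLHSsum : Summable
      (fun n : ℤ => p t (x - y + 2 * n * L) + p t (x + y + 2 * n * L)) :=
    Summable.of_nonneg_of_le hnonneg hterm hRHSsum
  have hGN : GN L t x y ≤ ∑' n : ℤ, 2 * p t (x - y) * q ^ (n.natAbs - 1) := by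
    unfold GN
    exact Summable.tsum_le_tsum hterm hLHSsum hRHSsum
  rw [tsum_mul_left, hval] at hGN
  have hp : 0 ≤ p t (x - y) := p_nonneg _ _
  have hinv : (1 - q)⁻¹ = 1 / (1 - q) := (one_div _).symm
  calc GN L t x y ≤ 2 * p t (x - y) * (1 + 2 * (1 - q)⁻¹) := hGN
    _ = p t (x - y) * (2 + 4 / (1 - q)) := by rw [hinv]; ring
    _ ≤ p t (x - y) * (4 + 4 / (1 - q)) := by
        have hinv0 : 0 ≤ 4 / (1 - q) := by positivity
        apply mul_le_mul_of_nonneg_left (by linarith) hp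
end

section
/- For every t > 0, ∫_0^t ∑_{j∈ℤ} p_r(j) dr = ∑_{n∈ℤ} (1 − e^{−2tπ²n²})/(2π²n²) < ∞, where the n = 0 summand is interpreted as t. -/
open Real MeasureTheory

lemma poisson_heat (r : ℝ) (hr : 0 < r) :
    (∑' j : ℤ, p r (j : ℝ)) = ∑' n : ℤ, Real.exp (-(2 * Real.pi ^ 2 * (n : ℝ) ^ 2) * r) := by
  have h2πr : (0:ℝ) < 2 * Real.pi * r := by positivity
  have ha : (0:ℝ) < (2 * Real.pi * r)⁻¹ := by positivity
  have key := Real.tsum_exp_neg_mul_int_sq ha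
  have h1 : ∀ j : ℤ, p r (j : ℝ)
      = (Real.sqrt (2 * Real.pi * r))⁻¹
        * Real.exp (-Real.pi * (2 * Real.pi * r)⁻¹ * (j : ℝ) ^ 2) := by
    intro j
    unfold p
    congr 1
    congr 1
    field_simp
  have h2 : ∀ n : ℤ, Real.exp (-Real.pi / (2 * Real.pi * r)⁻¹ * (n : ℝ) ^ 2)
      = Real.exp (-(2 * Real.pi ^ 2 * (n : ℝ) ^ 2) * r) := by
    intro n
    congr 1
    rw [div_eq_mul_inv, inv_inv]
    ring
  have hrt : (1:ℝ) / ((2 * Real.pi * r)⁻¹) ^ ((1:ℝ)/2) = Real.sqrt (2 * Real.pi * r) := by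
    rw [Real.inv_rpow h2πr.le, one_div, inv_inv, ← Real.sqrt_eq_rpow]
  calc (∑' j : ℤ, p r (j : ℝ))
      = (Real.sqrt (2 * Real.pi * r))⁻¹
        * ∑' j : ℤ, Real.exp (-Real.pi * (2 * Real.pi * r)⁻¹ * (j : ℝ) ^ 2) := by
        rw [← tsum_mul_left]; exact tsum_congr h1
    _ = (Real.sqrt (2 * Real.pi * r))⁻¹ * (Real.sqrt (2 * Real.pi * r)
        * ∑' n : ℤ, Real.exp (-(2 * Real.pi ^ 2 * (n : ℝ) ^ 2) * r)) := by
        rw [key, hrt]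
        congr 1
        congr 1
        exact tsum_congr h2
    _ = ∑' n : ℤ, Real.exp (-(2 * Real.pi ^ 2 * (n : ℝ) ^ 2) * r) := by
        rw [← mul_assoc, inv_mul_cancel₀ (by positivity), one_mul]

lemma exp_int_Ioo (c t : ℝ) (hc : 0 < c) (ht : 0 < t) :
    ∫ r in Set.Ioo 0 t, Real.exp (-c * r) = (1 - Real.exp (-c * t)) / c := by
  rw [← MeasureTheory.integral_Ioc_eq_integral_Ioo,
    ← intervalIntegral.integral_of_le ht.le]
  have hderiv : ∀ x ∈ Set.uIcc 0 t,
      HasDerivAt (fun x => -(Real.exp (-c * x) / c)) (Real.exp (-c * x)) x := by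
    intro x _
    have h1 : HasDerivAt (fun x : ℝ => -c * x) (-c) x := by
      simpa using (hasDerivAt_id x).const_mul (-c)
    have h2 := (h1.exp.div_const c).neg
    convert h2 using 1
    · rfl
    · rfl
    · rfl
    · rw [mul_neg, neg_div, neg_neg, mul_div_assoc, div_self hc.ne', mul_one]
  have hcont : IntervalIntegrable (fun x => Real.exp (-c * x)) volume 0 t :=
    (Real.continuous_exp.comp (continuous_const.mul continuous_id)).intervalIntegrable 0 t
  rw [intervalIntegral.integral_eq_sub_of_hasDerivAt hderiv hcont]
  simp
  field_simp
  ring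

theorem integral_sum_heat_kernel_integers (t : ℝ) (ht : 0 < t) :
    (∫ r in Set.Ioo 0 t, ∑' j : ℤ, p r (j : ℝ))
        = ∑' n : ℤ, (if n = 0 then t
            else (1 - Real.exp (-2 * t * Real.pi ^ 2 * (n : ℝ) ^ 2)) /
              (2 * Real.pi ^ 2 * (n : ℝ) ^ 2)) ∧
      Summable (fun n : ℤ => (if n = 0 then t
            else (1 - Real.exp (-2 * t * Real.pi ^ 2 * (n : ℝ) ^ 2)) /
              (2 * Real.pi ^ 2 * (n : ℝ) ^ 2))) := by
  set f : ℤ → ℝ → ℝ := fun n r => Real.exp (-(2 * Real.pi ^ 2 * (n : ℝ) ^ 2) * r) with hf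
  set g : ℤ → ℝ := fun n => (if n = 0 then t
            else (1 - Real.exp (-2 * t * Real.pi ^ 2 * (n : ℝ) ^ 2)) /
              (2 * Real.pi ^ 2 * (n : ℝ) ^ 2)) with hg
  -- integral of each f n
  have hInt : ∀ n : ℤ, (∫ r in Set.Ioo 0 t, f n r) = g n := by
    intro n
    by_cases hn : n = 0
    · subst hn
      simp only [hf, hg, Int.cast_zero, if_true]
      simp [Real.volume_Ioo, ht.le]
    · have hc : (0:ℝ) < 2 * Real.pi ^ 2 * (n : ℝ) ^ 2 := by
        have : (n:ℝ) ≠ 0 := Int.cast_ne_zero.mpr hn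
        positivity
      rw [hf, hg]
      simp only [hn, if_false]
      rw [exp_int_Ioo _ t hc ht]
      congr 2
      ring
  -- nonnegativity and summability of g
  have hgnonneg : ∀ n, 0 ≤ g n := by
    intro n
    rw [hg]
    by_cases hn : n = 0
    · simp [hn, ht.le]
    · simp only [hn, if_false]
      have hc : (0:ℝ) < 2 * Real.pi ^ 2 * (n : ℝ) ^ 2 := by
        have : (n:ℝ) ≠ 0 := Int.cast_ne_zero.mpr hn
        positivity
      apply div_nonneg _ hc.le
      have : Real.exp (-2 * t * Real.pi ^ 2 * (n : ℝ) ^ 2) ≤ 1 := by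
        rw [Real.exp_le_one_iff]
        have : (n:ℝ) ≠ 0 := Int.cast_ne_zero.mpr hn
        have hn2 : (0:ℝ) < (n:ℝ)^2 := by positivity
        nlinarith [Real.pi_pos]
      linarith
  have hgsum : Summable g := by
    set g0 : ℤ → ℝ := fun n => (1 - Real.exp (-2 * t * Real.pi ^ 2 * (n : ℝ) ^ 2)) /
              (2 * Real.pi ^ 2 * (n : ℝ) ^ 2) with hg0
    have hg0sum : Summable g0 := by
      have hbase : Summable (fun n : ℤ => (1 / (2 * Real.pi ^ 2)) * (1 / (n:ℝ) ^ 2)) :=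
        (summable_one_div_int_pow.mpr one_lt_two).mul_left _
      apply hbase.of_nonneg_of_le
      · intro n
        by_cases hn : n = 0
        · simp [hg0, hn]
        · have hc : (0:ℝ) < 2 * Real.pi ^ 2 * (n : ℝ) ^ 2 := by
            have : (n:ℝ) ≠ 0 := Int.cast_ne_zero.mpr hn
            positivity
          apply div_nonneg _ hc.le
          have : Real.exp (-2 * t * Real.pi ^ 2 * (n : ℝ) ^ 2) ≤ 1 := by
            rw [Real.exp_le_one_iff]
            have : (n:ℝ) ≠ 0 := Int.cast_ne_zero.mpr hn
            have hn2 : (0:ℝ) < (n:ℝ)^2 := by positivity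
            nlinarith [Real.pi_pos]
          linarith
      · intro n
        by_cases hn : n = 0
        · simp [hg0, hn]
        · have hn' : (n:ℝ) ≠ 0 := Int.cast_ne_zero.mpr hn
          have hc : (0:ℝ) < 2 * Real.pi ^ 2 * (n : ℝ) ^ 2 := by positivity
          rw [hg0]
          have h1 : (1 : ℝ) / (2 * Real.pi ^ 2) * (1 / (n:ℝ) ^ 2)
              = 1 / (2 * Real.pi ^ 2 * (n : ℝ) ^ 2) := by
            field_simp
          rw [h1]
          rw [div_le_div_iff_of_pos_right hc]
          linarith [Real.exp_nonneg (-2 * t * Real.pi ^ 2 * (n : ℝ) ^ 2)]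
    have hhsum : Summable (fun n : ℤ => if n = 0 then t else 0) := by
      apply summable_of_ne_finset_zero (s := {0})
      intro n hn
      simp only [Finset.mem_singleton] at hn
      simp [hn]
    have : g = fun n => (if n = 0 then t else 0) + g0 n := by
      funext n
      by_cases hn : n = 0
      · have : g0 0 = 0 := by simp [hg0]
        simp [hg, hg0, hn, this]
      · simp [hg, hg0, hn]
    rw [this]
    exact hhsum.add hg0sum
  refine ⟨?_, hgsum⟩
  -- rewrite integrand via Poisson summation
  have hcongr : (∫ r in Set.Ioo 0 t, ∑' j : ℤ, p r (j : ℝ))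
      = ∫ r in Set.Ioo 0 t, ∑' n : ℤ, f n r := by
    apply MeasureTheory.setIntegral_congr_fun measurableSet_Ioo
    intro r hr
    exact poisson_heat r hr.1
  rw [hcongr]
  -- swap integral and sum
  have hmeas : ∀ n : ℤ, AEStronglyMeasurable (f n) (volume.restrict (Set.Ioo 0 t)) := by
    intro n
    exact (Real.continuous_exp.comp (continuous_const.mul continuous_id)).aestronglyMeasurable
  have hintgr : ∀ n : ℤ, IntegrableOn (f n) (Set.Ioo 0 t) volume := by
    intro n
    have : Continuous (f n) := Real.continuous_exp.comp (continuous_const.mul continuous_id)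
    exact (this.integrableOn_Icc).mono_set Set.Ioo_subset_Icc_self
  have hlint : ∀ n : ℤ, (∫⁻ r in Set.Ioo 0 t, ‖f n r‖₊) = ENNReal.ofReal (g n) := by
    intro n
    rw [← hInt n, MeasureTheory.ofReal_integral_eq_lintegral_ofReal (hintgr n)
      (Filter.Eventually.of_forall fun r => Real.exp_nonneg _)]
    apply lintegral_congr
    intro r
    rw [← Real.enorm_eq_ofReal (Real.exp_nonneg _)]
    rfl
  have hfin : (∑' n : ℤ, ∫⁻ r in Set.Ioo 0 t, ‖f n r‖₊) ≠ ⊤ := by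
    have : (∑' n : ℤ, ∫⁻ r in Set.Ioo 0 t, ‖f n r‖₊)
        = ENNReal.ofReal (∑' n, g n) := by
      rw [ENNReal.ofReal_tsum_of_nonneg hgnonneg hgsum]
      exact tsum_congr hlint
    rw [this]
    exact ENNReal.ofReal_ne_top
  rw [MeasureTheory.integral_tsum hmeas hfin]
  exact tsum_congr hInt
end
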